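/- Let G be a nearly interval graph containing a blocking quadruple a,b,c,d. Then there is a labelling of the quadruple such that G contains an a-b path missed by c and d, an a-c path missed by b and d, and an a-d path missed by b and c; moreover every b-c path of G contains a neighbour of a or d, every b-d path contains a neighbour of a or c, and every c-d path contains a neighbour of a or b. -/

import Mathlib

open SimpleGraph

variable {V : Type*}

def Misses (G : SimpleGraph V) (x : V) {a b : V} (p : G.Walk a b) : Prop :=
  x ∉ p.support ∧ ∀ y ∈ p.support, ¬ G.Adj x y

def Avoids (G : SimpleGraph V) (x y z w : V) : Prop :=
  (∃ p : G.Walk x y, p.IsPath ∧ Misses G z p ∧ Misses G w p) ∨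
  (∃ p : G.Walk z w, p.IsPath ∧ Misses G x p ∧ Misses G y p)

def IsBlockingQuadruple (G : SimpleGraph V) (x y z w : V) : Prop :=
  Avoids G x y z w ∧ Avoids G x z y w ∧ Avoids G x w y z

/-- `G` is an interval graph: the intersection graph of a family of intervals of the line. -/
def IsIntervalGraph (G : SimpleGraph V) : Prop :=
  ∃ s e : V → ℝ, ∀ u v : V, u ≠ v →
    (G.Adj u v ↔ (Set.Icc (s u) (e u) ∩ Set.Icc (s v) (e v)).Nonempty)

/-- A graph is chordal if it has no induced cycle of length at least four. -/
def Chordal (G : SimpleGraph V) : Prop :=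
  ∀ n : ℕ, 4 ≤ n → IsEmpty (SimpleGraph.cycleGraph n ↪g G)

/-- `G - N[v]` : the subgraph induced on the complement of the closed neighbourhood of `v`. -/
def delClosedNbhd (G : SimpleGraph V) (v : V) : SimpleGraph {u : V // u ≠ v ∧ ¬ G.Adj v u} :=
  G.induce {u : V | u ≠ v ∧ ¬ G.Adj v u}

def NearlyChordal (G : SimpleGraph V) : Prop := ∀ v : V, Chordal (delClosedNbhd G v)

def NearlyInterval (G : SimpleGraph V) : Prop := ∀ v : V, IsIntervalGraph (delClosedNbhd G v)

section Aux

lemma misses_reverse {G : SimpleGraph V} {x u v : V} {p : G.Walk u v}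
    (h : Misses G x p) : Misses G x p.reverse := by
  refine ⟨?_, ?_⟩
  · rw [Walk.support_reverse, List.mem_reverse]; exact h.1
  · intro y hy
    rw [Walk.support_reverse, List.mem_reverse] at hy
    exact h.2 y hy

lemma exists_adj_of_mem_support {G : SimpleGraph V} {u v : V} (p : G.Walk u v) :
    ∀ x, x ∈ p.support → x ≠ v → ∃ y ∈ p.support, G.Adj x y := by
  induction p with
  | nil =>
    intro x hx hxv
    rw [Walk.support_nil, List.mem_singleton] at hx
    exact absurd hx hxv
  | cons h q ih =>
    intro x hx hxv
    rw [Walk.support_cons, List.mem_cons] at hx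
    rcases hx with rfl | hx
    · refine ⟨_, ?_, h⟩
      rw [Walk.support_cons]
      exact List.mem_cons_of_mem _ q.start_mem_support
    · obtain ⟨y, hy, hadj⟩ := ih x hx hxv
      refine ⟨y, ?_, hadj⟩
      rw [Walk.support_cons]
      exact List.mem_cons_of_mem _ hy

/-- If `m`'s interval starts to the right of `u`'s interval end and not to the right of
`v`'s interval end, then any `u`–`v` walk missed by `m` yields a contradiction. -/
lemma interval_mid {G : SimpleGraph V} (s e : V → ℝ)
    (hrep : ∀ u v : V, u ≠ v →
      (G.Adj u v ↔ (Set.Icc (s u) (e u) ∩ Set.Icc (s v) (e v)).Nonempty))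
    (m : V) (hm : s m ≤ e m) :
    ∀ {u v : V} (p : G.Walk u v), m ∉ p.support → (∀ w ∈ p.support, ¬ G.Adj m w) →
      e u < s m → s m ≤ e v → False := by
  intro u v p
  induction p with
  | nil =>
    intro _ _ h1 h2; linarith
  | @cons u u1 v h q ih =>
    intro hmem hadj h1 h2
    rw [Walk.support_cons, List.mem_cons] at hmem
    push_neg at hmem
    by_cases hc : e u1 < s m
    · refine ih hmem.2 ?_ hc h2
      intro w hw
      exact hadj w (by rw [Walk.support_cons]; exact List.mem_cons_of_mem _ hw)
    · push_neg at hc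
      have hne : u ≠ u1 := G.ne_of_adj h
      obtain ⟨t, ht1, ht2⟩ := (hrep u u1 hne).1 h
      have hmu1 : m ≠ u1 := fun hh => (hmem.2 (hh ▸ q.start_mem_support)).elim
      have : G.Adj m u1 := (hrep m u1 hmu1).2
        ⟨s m, ⟨le_refl _, hm⟩, ⟨by linarith [ht2.1, ht1.2], hc⟩⟩
      refine hadj u1 ?_ this
      rw [Walk.support_cons]
      exact List.mem_cons_of_mem _ q.start_mem_support

/-- An interval graph contains no asteroidal triple. -/
lemma no_asteroidal {W : Type*} {H : SimpleGraph W} (hint : IsIntervalGraph H)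
    {x y z : W} (hxy : x ≠ y) (hxz : x ≠ z) (hyz : y ≠ z)
    (pxy : H.Walk x y) (pxz : H.Walk x z) (pyz : H.Walk y z)
    (hz : z ∉ pxy.support ∧ ∀ w ∈ pxy.support, ¬ H.Adj z w)
    (hy : y ∉ pxz.support ∧ ∀ w ∈ pxz.support, ¬ H.Adj y w)
    (hx : x ∉ pyz.support ∧ ∀ w ∈ pyz.support, ¬ H.Adj x w) : False := by
  obtain ⟨s, e, hrep⟩ := hint
  have nonemp : ∀ (u v : W), u ≠ v → H.Walk u v → s u ≤ e u := by
    intro u v huv p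
    cases p with
    | nil => exact absurd rfl huv
    | cons h q =>
      obtain ⟨t, ht1, _⟩ := (hrep _ _ (H.ne_of_adj h)).1 h
      exact le_trans ht1.1 ht1.2
  have hex : s x ≤ e x := nonemp x y hxy pxy
  have hey : s y ≤ e y := nonemp y z hyz pyz
  have hez : s z ≤ e z := nonemp z x (Ne.symm hxz) pxz.reverse
  have nzx : ¬ H.Adj z x := hz.2 x pxy.start_mem_support
  have nzy : ¬ H.Adj z y := hz.2 y pxy.end_mem_support
  have nyx : ¬ H.Adj y x := hy.2 x pxz.start_mem_support
  have disj : ∀ u v : W, u ≠ v → ¬ H.Adj u v → s u ≤ e u → s v ≤ e v →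
      e u < s v ∨ e v < s u := by
    intro u v huv hadj hu hv
    by_contra hcon
    push_neg at hcon
    exact hadj ((hrep u v huv).2 ⟨max (s u) (s v),
      ⟨le_max_left _ _, max_le hu hcon.1⟩, ⟨le_max_right _ _, max_le hcon.2 hv⟩⟩)
  have Dxy := disj x y hxy (fun h => nyx h.symm) hex hey
  have Dxz := disj x z hxz (fun h => nzx h.symm) hex hez
  have Dyz := disj y z hyz (fun h => nzy h.symm) hey hez
  have rsup : ∀ {u v : W} (p : H.Walk u v) (t : W), t ∉ p.support → t ∉ p.reverse.support := by
    intro u v p t ht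
    rw [Walk.support_reverse, List.mem_reverse]; exact ht
  have radj : ∀ {u v : W} (p : H.Walk u v) (t : W), (∀ w ∈ p.support, ¬ H.Adj t w) →
      (∀ w ∈ p.reverse.support, ¬ H.Adj t w) := by
    intro u v p t ht w hw
    rw [Walk.support_reverse, List.mem_reverse] at hw
    exact ht w hw
  rcases Dxy with h1 | h1 <;> rcases Dxz with h2 | h2 <;> rcases Dyz with h3 | h3
  · -- x < y, x < z, y < z : middle y, path x..z
    exact interval_mid s e hrep y hey pxz hy.1 hy.2 h1 (by linarith)
  · -- x < y, x < z, z < y : middle z, path x..y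
    exact interval_mid s e hrep z hez pxy hz.1 hz.2 h2 (by linarith)
  · -- z < x, x < y, y < z : impossible
    linarith
  · -- z < x < y : middle x, path z..y (reverse of pyz)
    exact interval_mid s e hrep x hex pyz.reverse (rsup pyz x hx.1) (radj pyz x hx.2)
      h2 (by linarith)
  · -- y < x, x < z : middle x, path y..z
    exact interval_mid s e hrep x hex pyz hx.1 hx.2 h1 (by linarith)
  · -- y < x, z < x, z < y? : e y < s x, e z < s x, e z < s y vs : impossible case is y<x,x<z,z<y
    linarith
  · -- y < z < x : middle z, path y..x (reverse of pxy)
    exact interval_mid s e hrep z hez pxy.reverse (rsup pxy z hz.1) (radj pxy z hz.2)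
      h3 (by linarith)
  · -- z < y < x : middle y, path z..x (reverse of pxz)
    exact interval_mid s e hrep y hey pxz.reverse (rsup pxz y hy.1) (radj pxz y hy.2)
      h3 (by linarith)

lemma walk_induce {G : SimpleGraph V} {S : Set V} :
    ∀ {u v : V} (p : G.Walk u v), (∀ t ∈ p.support, t ∈ S) → ∀ (hu : u ∈ S) (hv : v ∈ S),
      ∃ q : (G.induce S).Walk ⟨u, hu⟩ ⟨v, hv⟩, q.support.map Subtype.val = p.support := by
  intro u v p
  induction p with
  | nil =>
    intro _ hu _
    exact ⟨Walk.nil, by simp⟩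
  | cons h p ih =>
    intro hS hu hv
    have hm : _ ∈ S := hS _ (by rw [Walk.support_cons]; exact List.mem_cons_of_mem _ p.start_mem_support)
    obtain ⟨q, hq⟩ := ih (fun t ht => hS t (by rw [Walk.support_cons]; exact List.mem_cons_of_mem _ ht)) hm hv
    refine ⟨Walk.cons ?_ q, ?_⟩
    · exact h
    · exact congrArg (List.cons _) hq

/-- In a nearly interval graph there is no triple `x, y, z` with pairwise paths each
missed by the remaining vertex of the triple and also by a fourth vertex `w`. -/
lemma no_triple {G : SimpleGraph V} (hni : NearlyInterval G)
    {x y z w : V} (hxy : x ≠ y) (hxz : x ≠ z) (hyz : y ≠ z)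
    (pxy : G.Walk x y) (pxz : G.Walk x z) (pyz : G.Walk y z)
    (hzxy : Misses G z pxy) (hwxy : Misses G w pxy)
    (hyxz : Misses G y pxz) (hwxz : Misses G w pxz)
    (hxyz : Misses G x pyz) (hwyz : Misses G w pyz) : False := by
  classical
  have hS : ∀ {u v : V} (p : G.Walk u v), Misses G w p →
      ∀ t ∈ p.support, t ∈ {u : V | u ≠ w ∧ ¬ G.Adj w u} := by
    intro u v p hp t ht
    exact ⟨fun h => hp.1 (h ▸ ht), hp.2 t ht⟩
  have hxS : x ∈ {u : V | u ≠ w ∧ ¬ G.Adj w u} := hS pxy hwxy x pxy.start_mem_support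
  have hyS : y ∈ {u : V | u ≠ w ∧ ¬ G.Adj w u} := hS pxy hwxy y pxy.end_mem_support
  have hzS : z ∈ {u : V | u ≠ w ∧ ¬ G.Adj w u} := hS pxz hwxz z pxz.end_mem_support
  obtain ⟨q1, hq1⟩ := walk_induce pxy (hS pxy hwxy) hxS hyS
  obtain ⟨q2, hq2⟩ := walk_induce pxz (hS pxz hwxz) hxS hzS
  obtain ⟨q3, hq3⟩ := walk_induce pyz (hS pyz hwyz) hyS hzS
  have key : ∀ {u v : V} {hu hv} {p : G.Walk u v}
      (q : (G.induce {u : V | u ≠ w ∧ ¬ G.Adj w u}).Walk ⟨u, hu⟩ ⟨v, hv⟩),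
      q.support.map Subtype.val = p.support → ∀ (t : V) (htS : t ∈ {u : V | u ≠ w ∧ ¬ G.Adj w u}),
      Misses G t p →
      (⟨t, htS⟩ : {u : V | u ≠ w ∧ ¬ G.Adj w u}) ∉ q.support ∧
        ∀ r ∈ q.support, ¬ (G.induce {u : V | u ≠ w ∧ ¬ G.Adj w u}).Adj ⟨t, htS⟩ r := by
    intro u v hu hv p q hq t htS hmiss
    constructor
    · intro hmem
      exact hmiss.1 (hq ▸ List.mem_map_of_mem (f := Subtype.val) hmem)
    · intro r hr hadj
      have : (r : V) ∈ p.support := hq ▸ List.mem_map_of_mem (f := Subtype.val) hr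
      exact hmiss.2 r this hadj
  exact no_asteroidal (hni w)
    (fun h => hxy (congrArg Subtype.val h))
    (fun h => hxz (congrArg Subtype.val h))
    (fun h => hyz (congrArg Subtype.val h))
    q1 q2 q3
    (key q1 hq1 z hzS hzxy) (key q2 hq2 y hyS hyxz) (key q3 hq3 x hxS hxyz)

lemma avoids_ne {G : SimpleGraph V} {x y z w : V} (h : Avoids G x y z w) :
    x ≠ z ∧ x ≠ w ∧ y ≠ z ∧ y ≠ w := by
  rcases h with ⟨p, _, hz, hw⟩ | ⟨p, _, hx, hy⟩
  · refine ⟨?_, ?_, ?_, ?_⟩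
    · rintro rfl; exact hz.1 p.start_mem_support
    · rintro rfl; exact hw.1 p.start_mem_support
    · rintro rfl; exact hz.1 p.end_mem_support
    · rintro rfl; exact hw.1 p.end_mem_support
  · refine ⟨?_, ?_, ?_, ?_⟩
    · rintro rfl; exact hx.1 p.start_mem_support
    · rintro rfl; exact hx.1 p.end_mem_support
    · rintro rfl; exact hy.1 p.start_mem_support
    · rintro rfl; exact hy.1 p.end_mem_support

lemma blocked {G : SimpleGraph V} (hni : NearlyInterval G) {x y z w : V}
    (hxy : x ≠ y) (hxz : x ≠ z) (hyz : y ≠ z) (hwz : w ≠ z)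
    (pxy : G.Walk x y) (hz1 : Misses G z pxy) (hw1 : Misses G w pxy)
    (pxz : G.Walk x z) (hy2 : Misses G y pxz) (hw2 : Misses G w pxz) :
    ∀ p : G.Walk y z, p.IsPath → ∃ t ∈ p.support, G.Adj x t ∨ G.Adj w t := by
  intro p _
  by_contra hcon
  push_neg at hcon
  have hxs : x ∉ p.support := by
    intro hxmem
    obtain ⟨t, ht, hadj⟩ := exists_adj_of_mem_support p x hxmem hxz
    exact (hcon t ht).1 hadj
  have hws : w ∉ p.support := by
    intro hwmem
    obtain ⟨t, ht, hadj⟩ := exists_adj_of_mem_support p w hwmem hwz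
    exact (hcon t ht).2 hadj
  exact no_triple hni hxy hxz hyz pxy pxz p hz1 hw1 hy2 hw2
    ⟨hxs, fun t ht => (hcon t ht).1⟩ ⟨hws, fun t ht => (hcon t ht).2⟩

lemma star_case {G : SimpleGraph V} (hni : NearlyInterval G) {a' b' c' d' : V}
    (hab : a' ≠ b') (hac : a' ≠ c') (had : a' ≠ d')
    (hbc : b' ≠ c') (hbd : b' ≠ d') (hcd : c' ≠ d')
    (P1 : ∃ p : G.Walk a' b', p.IsPath ∧ Misses G c' p ∧ Misses G d' p)
    (P2 : ∃ p : G.Walk a' c', p.IsPath ∧ Misses G b' p ∧ Misses G d' p)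
    (P3 : ∃ p : G.Walk a' d', p.IsPath ∧ Misses G b' p ∧ Misses G c' p) :
    (∀ p : G.Walk b' c', p.IsPath → ∃ x ∈ p.support, G.Adj a' x ∨ G.Adj d' x) ∧
    (∀ p : G.Walk b' d', p.IsPath → ∃ x ∈ p.support, G.Adj a' x ∨ G.Adj c' x) ∧
    (∀ p : G.Walk c' d', p.IsPath → ∃ x ∈ p.support, G.Adj a' x ∨ G.Adj b' x) := by
  obtain ⟨p1, _, m1c, m1d⟩ := P1
  obtain ⟨p2, _, m2b, m2d⟩ := P2
  obtain ⟨p3, _, m3b, m3c⟩ := P3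
  exact ⟨blocked hni hab hac hbc hcd.symm p1 m1c m1d p2 m2b m2d,
    blocked hni hab had hbd hcd p1 m1d m1c p3 m3b m3c,
    blocked hni hac had hcd hbd p2 m2d m2b p3 m3c m3b⟩

end Aux

/-- In a nearly interval graph, a blocking quadruple can be relabelled
`a, b, c, d` so that there are `a–b`, `a–c`, `a–d` paths missed by the other two
vertices, and every `b–c`, `b–d`, `c–d` path contains a neighbour of one of the
remaining two vertices (namely of `a` or of the fourth vertex). -/
theorem nearlyInterval_blocking_quadruple_structure [Fintype V] (G : SimpleGraph V)
    (hni : NearlyInterval G) (a b c d : V) (hbq : IsBlockingQuadruple G a b c d) :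
    ∃ a' b' c' d' : V, ({a', b', c', d'} : Set V) = ({a, b, c, d} : Set V) ∧
      (∃ p : G.Walk a' b', p.IsPath ∧ Misses G c' p ∧ Misses G d' p) ∧
      (∃ p : G.Walk a' c', p.IsPath ∧ Misses G b' p ∧ Misses G d' p) ∧
      (∃ p : G.Walk a' d', p.IsPath ∧ Misses G b' p ∧ Misses G c' p) ∧
      (∀ p : G.Walk b' c', p.IsPath → ∃ x ∈ p.support, G.Adj a' x ∨ G.Adj d' x) ∧
      (∀ p : G.Walk b' d', p.IsPath → ∃ x ∈ p.support, G.Adj a' x ∨ G.Adj c' x) ∧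
      (∀ p : G.Walk c' d', p.IsPath → ∃ x ∈ p.support, G.Adj a' x ∨ G.Adj b' x) := by
  obtain ⟨h1, h2, h3⟩ := hbq
  obtain ⟨hac, had, hbc, hbd⟩ := avoids_ne h1
  obtain ⟨hab, -, hcb, hcd⟩ := avoids_ne h2
  rcases h1 with P1 | P1 <;> rcases h2 with P2 | P2 <;> rcases h3 with P3 | P3
  · -- ab, ac, ad : star at a
    obtain ⟨S1, S2, S3⟩ := star_case hni hab hac had hbc hbd hcd P1 P2 P3
    exact ⟨a, b, c, d, rfl, P1, P2, P3, S1, S2, S3⟩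
  · -- ab, ac, bc : triangle a b c, apply no_triple with w = d
    obtain ⟨p1, _, m1c, m1d⟩ := P1
    obtain ⟨p2, _, m2b, m2d⟩ := P2
    obtain ⟨p3, _, m3a, m3d⟩ := P3
    exact absurd (no_triple hni hab hac hbc p1 p2 p3 m1c m1d m2b m2d m3a m3d) not_false
  · -- ab, bd, ad : triangle a b d, apply no_triple with w = c
    obtain ⟨p1, _, m1c, m1d⟩ := P1
    obtain ⟨p2, _, m2a, m2c⟩ := P2
    obtain ⟨p3, _, m3b, m3c⟩ := P3
    exact absurd (no_triple hni hab had hbd p1 p3 p2 m1d m1c m3b m3c m2a m2c) not_false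
  · -- ab, bd, bc : star at b
    obtain ⟨p1, hp1, m1c, m1d⟩ := P1
    have P1' : ∃ p : G.Walk b a, p.IsPath ∧ Misses G c p ∧ Misses G d p :=
      ⟨p1.reverse, hp1.reverse, misses_reverse m1c, misses_reverse m1d⟩
    obtain ⟨S1, S2, S3⟩ := star_case hni hab.symm hbc hbd hac had hcd P1' P3 P2
    exact ⟨b, a, c, d, by ext t; simp; tauto, P1', P3, P2, S1, S2, S3⟩
  · -- cd, ac, ad : triangle a c d, apply no_triple with w = b
    obtain ⟨p1, _, m1a, m1b⟩ := P1
    obtain ⟨p2, _, m2b, m2d⟩ := P2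
    obtain ⟨p3, _, m3b, m3c⟩ := P3
    exact absurd (no_triple hni hac had hcd p2 p3 p1 m2d m2b m3c m3b m1a m1b) not_false
  · -- cd, ac, bc : star at c
    obtain ⟨p1, hp1, m1a, m1b⟩ := P1
    obtain ⟨p2, hp2, m2b, m2d⟩ := P2
    obtain ⟨p3, hp3, m3a, m3d⟩ := P3
    have Q1 : ∃ p : G.Walk c d, p.IsPath ∧ Misses G a p ∧ Misses G b p :=
      ⟨p1, hp1, m1a, m1b⟩
    have Q2 : ∃ p : G.Walk c a, p.IsPath ∧ Misses G d p ∧ Misses G b p :=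
      ⟨p2.reverse, hp2.reverse, misses_reverse m2d, misses_reverse m2b⟩
    have Q3 : ∃ p : G.Walk c b, p.IsPath ∧ Misses G d p ∧ Misses G a p :=
      ⟨p3.reverse, hp3.reverse, misses_reverse m3d, misses_reverse m3a⟩
    obtain ⟨S1, S2, S3⟩ := star_case hni hcd hac.symm hcb had.symm hbd.symm hab Q1 Q2 Q3
    exact ⟨c, d, a, b, by ext t; simp; tauto, Q1, Q2, Q3, S1, S2, S3⟩
  · -- cd, bd, ad : star at d
    obtain ⟨p1, hp1, m1a, m1b⟩ := P1
    obtain ⟨p2, hp2, m2a, m2c⟩ := P2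
    obtain ⟨p3, hp3, m3b, m3c⟩ := P3
    have Q1 : ∃ p : G.Walk d a, p.IsPath ∧ Misses G b p ∧ Misses G c p :=
      ⟨p3.reverse, hp3.reverse, misses_reverse m3b, misses_reverse m3c⟩
    have Q2 : ∃ p : G.Walk d b, p.IsPath ∧ Misses G a p ∧ Misses G c p :=
      ⟨p2.reverse, hp2.reverse, misses_reverse m2a, misses_reverse m2c⟩
    have Q3 : ∃ p : G.Walk d c, p.IsPath ∧ Misses G a p ∧ Misses G b p :=
      ⟨p1.reverse, hp1.reverse, misses_reverse m1a, misses_reverse m1b⟩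
    obtain ⟨S1, S2, S3⟩ := star_case hni had.symm hbd.symm hcd.symm hab hac hbc Q1 Q2 Q3
    exact ⟨d, a, b, c, by ext t; simp; tauto, Q1, Q2, Q3, S1, S2, S3⟩
  · -- cd, bd, bc : triangle b c d, apply no_triple with w = a
    obtain ⟨p1, _, m1a, m1b⟩ := P1
    obtain ⟨p2, _, m2a, m2c⟩ := P2
    obtain ⟨p3, _, m3a, m3d⟩ := P3
    exact absurd (no_triple hni hbc hbd hcd p3 p2 p1 m3d m3a m2c m2a m1b m1a) not_false
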